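/- Let N₊, N₋, Q, t be real numbers with t ≠ 1 and N₋t + N₊ ≠ 0, and define z₋ = ( Q²t/(t−1)² + N₊N₋ ) / (N₋t + N₊) and z₊ = t·z₋. Then Q²·z₊·z₋ = (N₋·z₊ + N₊·z₋ − N₊N₋)·(z₊ − z₋)². -/

import Mathlib

/-- rational parametrization of the cubic curve
`Q² z₊ z₋ = (N₋ z₊ + N₊ z₋ − N₊N₋)(z₊ − z₋)²`: with
`z₋ = (Q²t/(t−1)² + N₊N₋)/(N₋t + N₊)` and `z₊ = t z₋`, the curve equation holds. -/
theorem cubic_curve_rational_parametrization (Np Nm Q t : ℝ)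
    (ht : t ≠ 1) (hden : Nm * t + Np ≠ 0) :
    let zm := (Q ^ 2 * t / (t - 1) ^ 2 + Np * Nm) / (Nm * t + Np)
    let zp := t * zm
    Q ^ 2 * zp * zm = (Nm * zp + Np * zm - Np * Nm) * (zp - zm) ^ 2 := by
  have h1 : t - 1 ≠ 0 := sub_ne_zero.mpr ht
  intro zm zp
  simp only [zp, zm]
  have hden' : t * Nm + Np ≠ 0 := by rwa [mul_comm t Nm]
  field_simp
  ring
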